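/- Let all alphabets be finite and let (A^n, U^n, S_e^n, X^n, S^n, Y^n) have a joint law of the form P_{A^n U^n}(a^n,u^n) · ∏_{i=1}^n P_{S_{e,i} S_i | A_i}(s_{e,i}, s_i | a_i) · P_{X^n | U^n S_e^n}(x^n | u^n, s_e^n) · ∏_{i=1}^n P_{Y_i | X_i S_i}(y_i | x_i, s_i) (memoryless state generation given actions and memoryless channel). Define U*_i := (A^n, U^n, S_{e,i+1}^n, Y^{i−1}) for i = 1,…,n. Then (1/n)[ I(A^n, U^n; Y^n) − I(U^n; S_e^n | A^n) ] ≤ (1/n) Σ_{i=1}^n [ I(U*_i, A_i; Y_i) − I(S_{e,i}; U*_i | A_i) ], and consequently, with Q uniform on {1,…,n} independent of everything else and U := (U*_Q, Q), A := A_Q, S_e := S_{e,Q}, Y := Y_Q, one has (1/n)[ I(A^n, U^n; Y^n) − I(U^n; S_e^n | A^n) ] ≤ I(U, A; Y) − I(U; S_e | A). -/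

import Mathlib

open Filter

noncomputable section

namespace ISAC

abbrev Vec (α : Type) (n : ℕ) : Type := Fin n → α

/-- Expectation of a real-valued function under a `PMF`. -/
def expect {α : Type} (p : PMF α) (f : α → ℝ) : ℝ :=
  ∑' a, (p a).toReal * f a

/-- Information density `log (P(x,y) / (P(x) P(y)))`. -/
def infoDensity {α β : Type} (p : PMF (α × β)) (v : α × β) : ℝ :=
  Real.log ((p v).toReal /
    (((p.map Prod.fst) v.1).toReal * ((p.map Prod.snd) v.2).toReal))

/-- Conditional information density `log (P(x,y,c) P(c) / (P(x,c) P(y,c)))`. -/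
def condInfoDensity {α β γ : Type} (p : PMF (α × β × γ)) (v : α × β × γ) : ℝ :=
  Real.log (((p v).toReal * ((p.map fun t => t.2.2) v.2.2).toReal) /
    (((p.map fun t => (t.1, t.2.2)) (v.1, v.2.2)).toReal *
      ((p.map fun t => (t.2.1, t.2.2)) (v.2.1, v.2.2)).toReal))

/-- Shannon mutual information `I(X;Y)` of a joint `PMF`. -/
def mutInfo {α β : Type} (p : PMF (α × β)) : ℝ := expect p (infoDensity p)

/-- Shannon conditional mutual information `I(X;Y|Z)` (conditioning on the third
coordinate). -/
def condMutInfo {α β γ : Type} (p : PMF (α × β × γ)) : ℝ := expect p (condInfoDensity p)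

/-- Uniform distribution on `Fin n` for `0 < n`. -/
def uniformFin (n : ℕ) (hn : 0 < n) : PMF (Fin n) :=
  haveI : Nonempty (Fin n) := ⟨⟨0, hn⟩⟩
  PMF.uniformOfFintype (Fin n)

section SingleLetterization

variable {𝒜 𝒰 𝒮e 𝒮 𝒳 𝒴 : Type} {n : ℕ}

/-- The joint law `P_{A^n U^n} ∏_i P_{S_{e,i} S_i|A_i} P_{X^n|U^n S_e^n} ∏_i P_{Y_i|X_i S_i}`
assembled from its components. -/
def convJoint (PAU : PMF (Vec 𝒜 n × Vec 𝒰 n))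
    (qn : Vec 𝒜 n → PMF (Vec 𝒮e n × Vec 𝒮 n))
    (PX : Vec 𝒰 n × Vec 𝒮e n → PMF (Vec 𝒳 n))
    (Wn : Vec 𝒳 n × Vec 𝒮 n → PMF (Vec 𝒴 n)) :
    PMF (Vec 𝒜 n × Vec 𝒰 n × Vec 𝒮e n × Vec 𝒮 n × Vec 𝒳 n × Vec 𝒴 n) :=
  PAU.bind fun au => (qn au.1).bind fun ss => (PX (au.2, ss.1)).bind fun x =>
    (Wn (x, ss.2)).map fun y => (au.1, au.2, ss.1, ss.2, x, y)

/-- The auxiliary random variable `U*_i := (A^n, U^n, S_{e,i+1}^n, Y^{i−1})`, the future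
state side information and the past outputs being encoded by masking with `Option`. -/
def Ustar (i : Fin n)
    (t : Vec 𝒜 n × Vec 𝒰 n × Vec 𝒮e n × Vec 𝒮 n × Vec 𝒳 n × Vec 𝒴 n) :
    Vec 𝒜 n × Vec 𝒰 n × Vec (Option 𝒮e) n × Vec (Option 𝒴) n :=
  (t.1, t.2.1,
    fun j => if i < j then some (t.2.2.1 j) else none,
    fun j => if j < i then some (t.2.2.2.2.2 j) else none)

end SingleLetterization

open scoped ENNReal Classical

set_option linter.unusedSectionVars false
set_option linter.unusedVariables false

section Basics

variable {T β γ β₁ β₂ β₃ : Type} [Fintype T]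

lemma expect_eq_sum [Fintype β] (p : PMF β) (f : β → ℝ) :
    expect p f = ∑ b, (p b).toReal * f b := by
  rw [expect, tsum_fintype]

lemma toReal_ite (c : Prop) [Decidable c] (x : ℝ≥0∞) :
    (if c then x else 0).toReal = if c then x.toReal else 0 := by
  split <;> simp

lemma map_apply_sum (p : PMF T) (f : T → β) (b : β) :
    ((p.map f) b).toReal = ∑ t, if b = f t then (p t).toReal else 0 := by
  classical
  rw [PMF.map_apply, tsum_fintype,
    ENNReal.toReal_sum (fun t _ => by split <;> simp [PMF.apply_ne_top])]
  exact Finset.sum_congr rfl fun t _ => by split <;> simp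

lemma expect_map [Fintype β] (p : PMF T) (g : T → β) (f : β → ℝ) :
    expect (p.map g) f = ∑ t, (p t).toReal * f (g t) := by
  classical
  rw [expect_eq_sum]
  have : ∀ b, ((p.map g) b).toReal * f b = ∑ t, if b = g t then (p t).toReal * f b else 0 := by
    intro b
    rw [map_apply_sum, Finset.sum_mul]
    refine Finset.sum_congr rfl fun t _ => ?_
    split <;> simp
  rw [Finset.sum_congr rfl fun b _ => this b, Finset.sum_comm]
  refine Finset.sum_congr rfl fun t _ => ?_
  rw [Finset.sum_ite_eq' Finset.univ (g t) (fun b => (p t).toReal * f b)]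
  simp

/-- Marginal value of `p` under `f` at the realized point `f t`. -/
def mval (p : PMF T) (f : T → β) (t : T) : ℝ := ((p.map f) (f t)).toReal

lemma mval_nonneg (p : PMF T) (f : T → β) (t : T) : 0 ≤ mval p f t :=
  ENNReal.toReal_nonneg

lemma le_mval (p : PMF T) (f : T → β) (t : T) : (p t).toReal ≤ mval p f t := by
  classical
  rw [mval, map_apply_sum]
  have := Finset.single_le_sum (f := fun s => if f t = f s then (p s).toReal else 0)
    (fun s _ => by split <;> simp) (Finset.mem_univ t)
  simpa using this

lemma mval_pos (p : PMF T) (f : T → β) {t : T} (h : p t ≠ 0) : 0 < mval p f t := by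
  have h1 : 0 < (p t).toReal :=
    ENNReal.toReal_pos h (PMF.apply_ne_top p t)
  exact h1.trans_le (le_mval p f t)

lemma mval_ne_zero (p : PMF T) (f : T → β) {t : T} (h : p t ≠ 0) : mval p f t ≠ 0 :=
  (mval_pos p f h).ne'

lemma mval_congr {p : PMF T} {f : T → β} {g : T → γ}
    (h : ∀ s u : T, f s = f u ↔ g s = g u) (t : T) : mval p f t = mval p g t := by
  classical
  rw [mval, mval, map_apply_sum, map_apply_sum]
  refine Finset.sum_congr rfl fun s _ => ?_
  rw [if_congr (h t s) rfl rfl]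

lemma fiber_iff {f : T → β} {g : T → γ} (φ : β → γ) (ψ : γ → β)
    (hφ : ∀ s, g s = φ (f s)) (hψ : ∀ s, f s = ψ (g s)) :
    ∀ s u : T, f s = f u ↔ g s = g u := by
  intro s u
  constructor
  · intro h; rw [hφ, hφ, h]
  · intro h; rw [hψ, hψ, h]

lemma mval_eq {p : PMF T} {f : T → β} {g : T → γ} (φ : β → γ) (ψ : γ → β)
    (hφ : ∀ s, g s = φ (f s)) (hψ : ∀ s, f s = ψ (g s)) (t : T) :
    mval p f t = mval p g t :=
  mval_congr (fiber_iff φ ψ hφ hψ) t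

lemma mval_const (p : PMF T) (c : β) (t : T) : mval p (fun _ => c) t = 1 := by
  rw [mval]
  have : p.map (fun _ => c) = PMF.pure c := PMF.map_const p c
  rw [this, PMF.pure_apply, if_pos rfl, ENNReal.toReal_one]

lemma sum_marg [Fintype β] (p : PMF T) (f : T → β) :
    ∑ b, ((p.map f) b).toReal = 1 := by
  have h := (p.map f).tsum_coe
  rw [tsum_fintype] at h
  rw [← ENNReal.toReal_sum (fun b _ => PMF.apply_ne_top _ b), h, ENNReal.toReal_one]

lemma sum_pmf_toReal [Fintype β] (p : PMF β) : ∑ b, (p b).toReal = 1 := by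
  have h := p.tsum_coe
  rw [tsum_fintype] at h
  rw [← ENNReal.toReal_sum (fun b _ => PMF.apply_ne_top _ b), h, ENNReal.toReal_one]

lemma mutInfo_nonneg {α' β' : Type} [Fintype α'] [Fintype β'] (q : PMF (α' × β')) :
    0 ≤ mutInfo q := by
  classical
  have key : ∀ v : α' × β', (q v).toReal * (-(infoDensity q v)) ≤
      ((q.map Prod.fst) v.1).toReal * ((q.map Prod.snd) v.2).toReal - (q v).toReal := by
    intro v
    by_cases hv : q v = 0
    · simp [hv, mul_nonneg ENNReal.toReal_nonneg ENNReal.toReal_nonneg]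
    · have hq : 0 < (q v).toReal := ENNReal.toReal_pos hv (PMF.apply_ne_top _ _)
      have h1 : 0 < ((q.map Prod.fst) v.1).toReal := by
        have := mval_pos q Prod.fst (t := v) hv
        simpa [mval] using this
      have h2 : 0 < ((q.map Prod.snd) v.2).toReal := by
        have := mval_pos q Prod.snd (t := v) hv
        simpa [mval] using this
      have hr : 0 < ((q.map Prod.fst) v.1).toReal * ((q.map Prod.snd) v.2).toReal / (q v).toReal :=
        div_pos (mul_pos h1 h2) hq
      have hlog : -(infoDensity q v) =
          Real.log (((q.map Prod.fst) v.1).toReal * ((q.map Prod.snd) v.2).toReal / (q v).toReal) := by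
        rw [infoDensity, ← Real.log_inv, inv_div]
      rw [hlog]
      calc (q v).toReal * Real.log _ ≤ (q v).toReal *
            (((q.map Prod.fst) v.1).toReal * ((q.map Prod.snd) v.2).toReal / (q v).toReal - 1) :=
            mul_le_mul_of_nonneg_left (Real.log_le_sub_one_of_pos hr) hq.le
        _ = _ := by field_simp
  have hsum : ∑ v : α' × β', ((q.map Prod.fst) v.1).toReal * ((q.map Prod.snd) v.2).toReal = 1 := by
    rw [Fintype.sum_prod_type]
    simp only []
    rw [← Finset.sum_mul_sum Finset.univ Finset.univ (fun a => ((q.map Prod.fst) a).toReal)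
      (fun b => ((q.map Prod.snd) b).toReal), sum_marg, sum_marg, one_mul]
  have : -(mutInfo q) ≤ 0 := by
    rw [mutInfo, expect_eq_sum, ← Finset.sum_neg_distrib]
    calc ∑ v, -((q v).toReal * infoDensity q v)
        = ∑ v, (q v).toReal * (-(infoDensity q v)) := by simp [mul_neg]
      _ ≤ ∑ v, (((q.map Prod.fst) v.1).toReal * ((q.map Prod.snd) v.2).toReal - (q v).toReal) :=
          Finset.sum_le_sum fun v _ => key v
      _ = 0 := by rw [Finset.sum_sub_distrib, hsum, sum_pmf_toReal]; ring
  linarith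

lemma infoDensity_map (p : PMF T) (g : T → β₁ × β₂) {t : T} (h : p t ≠ 0) :
    infoDensity (p.map g) (g t) =
      Real.log (mval p g t) - Real.log (mval p (fun s => (g s).1) t)
        - Real.log (mval p (fun s => (g s).2) t) := by
  have h1 : (p.map g).map Prod.fst = p.map (fun s => (g s).1) := PMF.map_comp g p Prod.fst
  have h2 : (p.map g).map Prod.snd = p.map (fun s => (g s).2) := PMF.map_comp g p Prod.snd
  rw [infoDensity, h1, h2]
  show Real.log (mval p g t / (mval p (fun s => (g s).1) t * mval p (fun s => (g s).2) t)) = _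
  rw [Real.log_div (mval_ne_zero p g h)
      (mul_ne_zero (mval_ne_zero p _ h) (mval_ne_zero p _ h)),
    Real.log_mul (mval_ne_zero p _ h) (mval_ne_zero p _ h), sub_add_eq_sub_sub]

lemma condInfoDensity_map (p : PMF T) (g : T → β₁ × β₂ × β₃) {t : T} (h : p t ≠ 0) :
    condInfoDensity (p.map g) (g t) =
      Real.log (mval p g t) + Real.log (mval p (fun s => (g s).2.2) t)
        - Real.log (mval p (fun s => ((g s).1, (g s).2.2)) t)
        - Real.log (mval p (fun s => ((g s).2.1, (g s).2.2)) t) := by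
  have h1 : (p.map g).map (fun v => v.2.2) = p.map (fun s => (g s).2.2) :=
    PMF.map_comp g p _
  have h2 : (p.map g).map (fun v => (v.1, v.2.2)) = p.map (fun s => ((g s).1, (g s).2.2)) :=
    PMF.map_comp g p _
  have h3 : (p.map g).map (fun v => (v.2.1, v.2.2)) = p.map (fun s => ((g s).2.1, (g s).2.2)) :=
    PMF.map_comp g p _
  rw [condInfoDensity, h1, h2, h3]
  show Real.log (mval p g t * mval p (fun s => (g s).2.2) t /
      (mval p (fun s => ((g s).1, (g s).2.2)) t * mval p (fun s => ((g s).2.1, (g s).2.2)) t)) = _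
  rw [Real.log_div (mul_ne_zero (mval_ne_zero p _ h) (mval_ne_zero p _ h))
      (mul_ne_zero (mval_ne_zero p _ h) (mval_ne_zero p _ h)),
    Real.log_mul (mval_ne_zero p _ h) (mval_ne_zero p _ h),
    Real.log_mul (mval_ne_zero p _ h) (mval_ne_zero p _ h), sub_add_eq_sub_sub]

lemma mval_comp_inj (p : PMF T) {f : T → β} (k : β → γ) (hk : Function.Injective k) (t : T) :
    mval p (fun s => k (f s)) t = mval p f t :=
  mval_congr (fun s u => ⟨fun h => hk h ▸ rfl, fun h => by
    show k (f s) = k (f u); rw [h]⟩) t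

lemma expect_bind {ι : Type} [Fintype ι] [Fintype β] (q : PMF ι) (h : ι → PMF β) (f : β → ℝ) :
    expect (q.bind h) f = ∑ i, (q i).toReal * expect (h i) f := by
  classical
  rw [expect_eq_sum]
  have hv : ∀ b, ((q.bind h) b).toReal = ∑ i, (q i).toReal * ((h i) b).toReal := by
    intro b
    rw [PMF.bind_apply, tsum_fintype,
      ENNReal.toReal_sum (fun i _ => ENNReal.mul_ne_top (PMF.apply_ne_top _ _)
        (PMF.apply_ne_top _ _))]
    exact Finset.sum_congr rfl fun i _ => ENNReal.toReal_mul
  calc ∑ b, ((q.bind h) b).toReal * f b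
      = ∑ b, ∑ i, (q i).toReal * ((h i) b).toReal * f b := by
        refine Finset.sum_congr rfl fun b _ => ?_
        rw [hv, Finset.sum_mul]
    _ = ∑ i, ∑ b, (q i).toReal * ((h i) b).toReal * f b := Finset.sum_comm
    _ = ∑ i, (q i).toReal * expect (h i) f := by
        refine Finset.sum_congr rfl fun i _ => ?_
        rw [expect_eq_sum, Finset.mul_sum]
        exact Finset.sum_congr rfl fun b _ => by ring

lemma mutInfo_map_eq [Fintype β₁] [Fintype β₂] (p : PMF T) (g : T → β₁ × β₂) :
    mutInfo (p.map g) = ∑ t, (p t).toReal * infoDensity (p.map g) (g t) := by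
  rw [mutInfo, expect_map]

lemma condMutInfo_map_eq [Fintype β₁] [Fintype β₂] [Fintype β₃] (p : PMF T)
    (g : T → β₁ × β₂ × β₃) :
    condMutInfo (p.map g) = ∑ t, (p t).toReal * condInfoDensity (p.map g) (g t) := by
  rw [condMutInfo, expect_map]

end Basics

variable {𝒜 𝒰 𝒮e 𝒮 𝒳 𝒴 : Type}
    [Fintype 𝒜] [Fintype 𝒰] [Fintype 𝒮e] [Fintype 𝒮] [Fintype 𝒳] [Fintype 𝒴] {n : ℕ}
    (PAU : PMF (Vec 𝒜 n × Vec 𝒰 n))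
    (qn : Vec 𝒜 n → PMF (Vec 𝒮e n × Vec 𝒮 n))
    (PX : Vec 𝒰 n × Vec 𝒮e n → PMF (Vec 𝒳 n))
    (Wn : Vec 𝒳 n × Vec 𝒮 n → PMF (Vec 𝒴 n))

lemma convJoint_apply (a : Vec 𝒜 n) (u : Vec 𝒰 n) (se : Vec 𝒮e n) (s : Vec 𝒮 n)
    (x : Vec 𝒳 n) (y : Vec 𝒴 n) :
    convJoint PAU qn PX Wn (a, u, se, s, x, y) =
      PAU (a, u) * (qn a (se, s) * (PX (u, se) x * Wn (x, s) y)) := by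
  classical
  have W0 : ∀ (a' : Vec 𝒜 n) (u' : Vec 𝒰 n) (ss : Vec 𝒮e n × Vec 𝒮 n) (x' : Vec 𝒳 n),
      ((Wn (x', ss.2)).map fun y' => (a', u', ss.1, ss.2, x', y')) (a, u, se, s, x, y) =
        if a' = a ∧ u' = u ∧ ss.1 = se ∧ ss.2 = s ∧ x' = x then Wn (x', ss.2) y else 0 := by
    intro a' u' ss x'
    rw [PMF.map_apply]
    split_ifs with h
    · obtain ⟨h1, h2, h3, h4, h5⟩ := h
      subst h1 h2 h5
      refine (tsum_eq_single y fun y' hy' => ?_).trans ?_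
      · rw [if_neg]
        simp only [Prod.mk.injEq, not_and]
        intro _ _ h3' h4' _ hyy
        exact hy' hyy.symm
      · rw [if_pos]
        simp [h3, h4]
    · refine ENNReal.tsum_eq_zero |>.2 fun y' => ?_
      rw [if_neg]
      simp only [Prod.mk.injEq, not_and]
      intro h1 h2 h3 h4 h5 _
      exact h ⟨h1.symm, h2.symm, h3.symm, h4.symm, h5.symm⟩
  simp only [convJoint, PMF.bind_apply]
  rw [tsum_eq_single (a, u) (fun au hau => ?_)]
  rotate_left
  · -- other au give zero
    refine mul_eq_zero.2 (Or.inr ?_)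
    refine ENNReal.tsum_eq_zero |>.2 fun ss => ?_
    refine mul_eq_zero.2 (Or.inr ?_)
    refine ENNReal.tsum_eq_zero |>.2 fun x' => ?_
    refine mul_eq_zero.2 (Or.inr ?_)
    rw [W0]
    rw [if_neg]
    intro ⟨h1, h2, _⟩
    exact hau (Prod.ext h1 h2)
  rw [tsum_eq_single (se, s) (fun ss hss => ?_)]
  rotate_left
  · refine mul_eq_zero.2 (Or.inr ?_)
    refine ENNReal.tsum_eq_zero |>.2 fun x' => ?_
    refine mul_eq_zero.2 (Or.inr ?_)
    rw [W0, if_neg]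
    intro ⟨_, _, h3, h4, _⟩
    exact hss (Prod.ext h3 h4)
  rw [tsum_eq_single x (fun x' hx' => ?_)]
  rotate_left
  · refine mul_eq_zero.2 (Or.inr ?_)
    rw [W0, if_neg]
    intro ⟨_, _, _, _, h5⟩
    exact hx' h5
  rw [W0, if_pos ⟨rfl, rfl, rfl, rfl, rfl⟩]

lemma pmf_sum_univ {β : Type} [Fintype β] (p : PMF β) : ∑ b, p b = 1 := by
  rw [← PMF.tsum_coe p, tsum_fintype]

lemma map_fst_apply {β γ : Type} [Fintype β] [Fintype γ] (q : PMF (β × γ)) (b : β) :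
    (q.map Prod.fst) b = ∑ c, q (b, c) := by
  classical
  rw [PMF.map_apply, tsum_fintype, Fintype.sum_prod_type]
  rw [Finset.sum_eq_single b (fun b' _ hb' => ?_) (by simp)]
  · simp
  · apply Finset.sum_eq_zero
    intro c _
    exact if_neg fun h => hb' h.symm

/-- sum over a vector with one coordinate pinned, of a product of per-coordinate
factors each summing to one. -/
lemma sum_pi_cond {κ : Type} [Fintype κ] {m : ℕ} (f : Fin m → κ → ℝ≥0∞)
    (hf : ∀ j, ∑ τ, f j τ = 1) (i : Fin m) (σ : κ) :
    ∑ v : Vec κ m, (if σ = v i then ∏ j, f j (v j) else 0) = f i σ := by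
  classical
  set g : Fin m → κ → ℝ≥0∞ := fun j τ => if j = i then (if σ = τ then f j τ else 0) else f j τ
    with hg
  have hpt : ∀ v : Vec κ m, (if σ = v i then ∏ j, f j (v j) else 0) = ∏ j, g j (v j) := by
    intro v
    rw [← Finset.mul_prod_erase Finset.univ (fun j => g j (v j)) (Finset.mem_univ i)]
    have h1 : g i (v i) = if σ = v i then f i (v i) else 0 := by simp [hg]
    have h2 : ∏ j ∈ Finset.univ.erase i, g j (v j) = ∏ j ∈ Finset.univ.erase i, f j (v j) :=
      Finset.prod_congr rfl fun j hj => by simp [hg, (Finset.mem_erase.1 hj).1]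
    rw [h1, h2]
    split_ifs with h
    · rw [Finset.mul_prod_erase Finset.univ (fun j => f j (v j)) (Finset.mem_univ i)]
    · rw [zero_mul]
  simp_rw [hpt]
  have := Finset.prod_univ_sum (fun _ : Fin m => (Finset.univ : Finset κ)) (fun j τ => g j τ)
  rw [Fintype.piFinset_univ] at this
  rw [← this, ← Finset.mul_prod_erase Finset.univ (fun j => ∑ τ, g j τ) (Finset.mem_univ i)]
  have hgi : ∑ τ, g i τ = f i σ := by
    simp only [hg, if_pos rfl]
    rw [Finset.sum_ite_eq Finset.univ σ (fun τ => f i τ)]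
    simp
  have hrest : ∏ j ∈ Finset.univ.erase i, (∑ τ, g j τ) = 1 := by
    refine Finset.prod_eq_one fun j hj => ?_
    have hji := (Finset.mem_erase.1 hj).1
    simp only [hg, if_neg hji]
    exact hf j
  rw [hgi, hrest, mul_one]

lemma sum_pi_one {κ : Type} [Fintype κ] {m : ℕ} (f : Fin m → κ → ℝ≥0∞)
    (hf : ∀ j, ∑ τ, f j τ = 1) :
    ∑ v : Vec κ m, ∏ j, f j (v j) = 1 := by
  classical
  have := Finset.prod_univ_sum (fun _ : Fin m => (Finset.univ : Finset κ)) (fun j τ => f j τ)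
  rw [Fintype.piFinset_univ] at this
  rw [← this]
  exact Finset.prod_eq_one fun j _ => hf j

lemma map_snd_apply {β γ : Type} [Fintype β] [Fintype γ] (q : PMF (β × γ)) (c : γ) :
    (q.map Prod.snd) c = ∑ b, q (b, c) := by
  classical
  rw [PMF.map_apply, tsum_fintype, Fintype.sum_prod_type]
  refine Finset.sum_congr rfl fun b _ => ?_
  rw [Finset.sum_eq_single c (fun c' _ hc' => if_neg fun h => hc' h.symm) (by simp)]
  simp

section Marginals

variable (qs : 𝒜 → PMF (𝒮e × 𝒮))
variable (hq : ∀ (a : Vec 𝒜 n) (se : Vec 𝒮e n) (s : Vec 𝒮 n),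
      (qn a) (se, s) = ∏ i : Fin n, (qs (a i)) (se i, s i))

lemma qse_sum_one (α : 𝒜) : ∑ τ, ((qs α).map Prod.fst) τ = 1 :=
  pmf_sum_univ _

include hq in
lemma map_seA_apply (σv : Vec 𝒮e n) (av : Vec 𝒜 n) :
    ((convJoint PAU qn PX Wn).map fun t => (t.2.2.1, t.1)) (σv, av) =
      (PAU.map Prod.fst) av * ∏ i, ((qs (av i)).map Prod.fst) (σv i) := by
  classical
  have hsum_s : ∀ (a : Vec 𝒜 n) (se : Vec 𝒮e n),
      ∑ s : Vec 𝒮 n, (qn a) (se, s) = ∏ i, ((qs (a i)).map Prod.fst) (se i) := by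
    intro a se
    simp only [hq]
    have := Finset.prod_univ_sum (fun _ : Fin n => (Finset.univ : Finset 𝒮))
      (fun i σ₂ => (qs (a i)) (se i, σ₂))
    rw [Fintype.piFinset_univ] at this
    rw [← this]
    exact Finset.prod_congr rfl fun i _ => (map_fst_apply _ _).symm
  rw [PMF.map_apply, tsum_fintype]
  simp only [Fintype.sum_prod_type]
  simp only [convJoint_apply PAU qn PX Wn, Prod.mk.injEq]
  simp only [Finset.sum_ite_irrel, Finset.sum_const_zero]
  simp only [← Finset.mul_sum, pmf_sum_univ, mul_one]
  simp only [hsum_s]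
  simp only [ite_and, Finset.sum_ite_irrel, Finset.sum_const_zero, Finset.sum_ite_eq,
    Finset.mem_univ, if_true]
  rw [← Finset.sum_mul, ← map_fst_apply]

include hq in
lemma map_A_apply (av : Vec 𝒜 n) :
    ((convJoint PAU qn PX Wn).map fun t => t.1) av = (PAU.map Prod.fst) av := by
  classical
  have comp : ((convJoint PAU qn PX Wn).map fun t => t.1) =
      ((convJoint PAU qn PX Wn).map fun t => (t.2.2.1, t.1)).map Prod.snd := by
    rw [PMF.map_comp]; rfl
  rw [comp, map_snd_apply]
  simp only [map_seA_apply PAU qn PX Wn qs hq]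
  rw [← Finset.mul_sum, sum_pi_one (fun i τ => ((qs (av i)).map Prod.fst) τ)
    (fun j => qse_sum_one qs (av j)), mul_one]

include hq in
lemma map_seiAi_apply (i : Fin n) (σ : 𝒮e) (α : 𝒜) :
    ((convJoint PAU qn PX Wn).map fun t => (t.2.2.1 i, t.1 i)) (σ, α) =
      ((convJoint PAU qn PX Wn).map fun t => t.1 i) α * ((qs α).map Prod.fst) σ := by
  classical
  have comp1 : ((convJoint PAU qn PX Wn).map fun t => (t.2.2.1 i, t.1 i)) =
      ((convJoint PAU qn PX Wn).map fun t => (t.2.2.1, t.1)).map fun v => (v.1 i, v.2 i) := by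
    rw [PMF.map_comp]; rfl
  have comp2 : ((convJoint PAU qn PX Wn).map fun t => t.1 i) =
      ((convJoint PAU qn PX Wn).map fun t => (t.2.2.1, t.1)).map fun v => v.2 i := by
    rw [PMF.map_comp]; rfl
  have inner1 : ∀ av : Vec 𝒜 n,
      ∑ σv : Vec 𝒮e n, (if σ = σv i then if α = av i then
          (PAU.map Prod.fst) av * ∏ j, ((qs (av j)).map Prod.fst) (σv j) else 0 else 0) =
      (if α = av i then (PAU.map Prod.fst) av * ((qs α).map Prod.fst) σ else 0) := by
    intro av
    by_cases hα : α = av i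
    · simp only [if_pos hα]
      have hsw : ∀ σv : Vec 𝒮e n, (if σ = σv i then
          (PAU.map Prod.fst) av * ∏ j, ((qs (av j)).map Prod.fst) (σv j) else 0) =
          (PAU.map Prod.fst) av * (if σ = σv i then
            ∏ j, ((qs (av j)).map Prod.fst) (σv j) else 0) := by
        intro σv; split <;> simp
      simp only [hsw, ← Finset.mul_sum]
      rw [sum_pi_cond (fun j τ => ((qs (av j)).map Prod.fst) τ)
        (fun j => qse_sum_one qs (av j)) i σ, ← hα]
    · simp only [if_neg hα, Finset.sum_const_zero, ite_self]
  have inner2 : ∀ av : Vec 𝒜 n,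
      ∑ σv : Vec 𝒮e n, (if α = av i then
          (PAU.map Prod.fst) av * ∏ j, ((qs (av j)).map Prod.fst) (σv j) else 0) =
      (if α = av i then (PAU.map Prod.fst) av else 0) := by
    intro av
    by_cases hα : α = av i
    · simp only [if_pos hα, ← Finset.mul_sum]
      rw [sum_pi_one (fun j τ => ((qs (av j)).map Prod.fst) τ)
        (fun j => qse_sum_one qs (av j)), mul_one]
    · simp [if_neg hα]
  rw [comp1, comp2, PMF.map_apply, PMF.map_apply, tsum_fintype, tsum_fintype]
  simp only [Fintype.sum_prod_type]
  simp only [map_seA_apply PAU qn PX Wn qs hq, Prod.mk.injEq, ite_and]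
  rw [Finset.sum_comm]
  calc ∑ av : Vec 𝒜 n, ∑ σv : Vec 𝒮e n, (if σ = σv i then if α = av i then
          (PAU.map Prod.fst) av * ∏ j, ((qs (av j)).map Prod.fst) (σv j) else 0 else 0)
      = ∑ av : Vec 𝒜 n, (if α = av i then (PAU.map Prod.fst) av * ((qs α).map Prod.fst) σ else 0) :=
        Finset.sum_congr rfl fun av _ => inner1 av
    _ = (∑ av : Vec 𝒜 n, (if α = av i then (PAU.map Prod.fst) av else 0)) *
          ((qs α).map Prod.fst) σ := by
        rw [Finset.sum_mul]
        exact Finset.sum_congr rfl fun av _ => by split <;> simp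
    _ = _ := by
        congr 1
        rw [Finset.sum_comm]
        exact (Finset.sum_congr rfl fun av _ => inner2 av).symm

end Marginals

section Ident

/-- Past-outputs mask `Y^{<k}`. -/
def yMask (k : ℕ) (t : Vec 𝒜 n × Vec 𝒰 n × Vec 𝒮e n × Vec 𝒮 n × Vec 𝒳 n × Vec 𝒴 n) :
    Vec (Option 𝒴) n :=
  fun j => if (j : ℕ) < k then some (t.2.2.2.2.2 j) else none

/-- Future-states mask `S_{e,≥k}`. -/
def sMask (k : ℕ) (t : Vec 𝒜 n × Vec 𝒰 n × Vec 𝒮e n × Vec 𝒮 n × Vec 𝒳 n × Vec 𝒴 n) :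
    Vec (Option 𝒮e) n :=
  fun j => if k ≤ (j : ℕ) then some (t.2.2.1 j) else none

/-- The canonical tuple `(A^n U^n, Y^{<k}, S_{e,≥l})`. -/
def MM (k l : ℕ) (t : Vec 𝒜 n × Vec 𝒰 n × Vec 𝒮e n × Vec 𝒮 n × Vec 𝒳 n × Vec 𝒴 n) :
    (Vec 𝒜 n × Vec 𝒰 n) × Vec (Option 𝒴) n × Vec (Option 𝒮e) n :=
  ((t.1, t.2.1), yMask k t, sMask l t)

variable {T' : Type}

lemma yext (k : ℕ) (s u : Vec 𝒜 n × Vec 𝒰 n × Vec 𝒮e n × Vec 𝒮 n × Vec 𝒳 n × Vec 𝒴 n) :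
    yMask k s = yMask k u ↔
      ∀ j : Fin n, (j : ℕ) < k → s.2.2.2.2.2 j = u.2.2.2.2.2 j := by
  unfold yMask
  rw [funext_iff]
  constructor
  · intro h j hj
    have := h j
    rw [if_pos hj, if_pos hj] at this
    exact Option.some_injective _ this
  · intro h j
    by_cases hj : (j : ℕ) < k
    · rw [if_pos hj, if_pos hj, h j hj]
    · rw [if_neg hj, if_neg hj]

lemma sext (k : ℕ) (s u : Vec 𝒜 n × Vec 𝒰 n × Vec 𝒮e n × Vec 𝒮 n × Vec 𝒳 n × Vec 𝒴 n) :
    sMask k s = sMask k u ↔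
      ∀ j : Fin n, k ≤ (j : ℕ) → s.2.2.1 j = u.2.2.1 j := by
  unfold sMask
  rw [funext_iff]
  constructor
  · intro h j hj
    have := h j
    rw [if_pos hj, if_pos hj] at this
    exact Option.some_injective _ this
  · intro h j
    by_cases hj : k ≤ (j : ℕ)
    · rw [if_pos hj, if_pos hj, h j hj]
    · rw [if_neg hj, if_neg hj]

lemma Ustar_eq (i : Fin n)
    (t : Vec 𝒜 n × Vec 𝒰 n × Vec 𝒮e n × Vec 𝒮 n × Vec 𝒳 n × Vec 𝒴 n) :
    Ustar i t = (t.1, t.2.1, sMask ((i : ℕ) + 1) t, yMask (i : ℕ) t) := by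
  unfold Ustar sMask yMask
  refine congrArg (Prod.mk _) (congrArg (Prod.mk _) ?_)
  refine Prod.ext ?_ rfl
  funext j
  exact if_congr (by rw [Fin.lt_def]; omega) rfl rfl

section Conv

variable (P : PMF (Vec 𝒜 n × Vec 𝒰 n × Vec 𝒮e n × Vec 𝒮 n × Vec 𝒳 n × Vec 𝒴 n))
variable (t : Vec 𝒜 n × Vec 𝒰 n × Vec 𝒮e n × Vec 𝒮 n × Vec 𝒳 n × Vec 𝒴 n)

lemma c_j1 : mval P (fun t => ((t.1, t.2.1), t.2.2.2.2.2)) t = mval P (MM n n) t := by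
  refine mval_congr (fun s u => ?_) t
  simp only [MM, Prod.mk.injEq]
  constructor
  · rintro ⟨h1, h2⟩
    refine ⟨h1, ?_, ?_⟩
    · rw [yext]; intro j _; rw [h2]
    · rw [sext]; intro j hj; exact absurd hj (by have := j.isLt; omega)
  · rintro ⟨h1, h2, -⟩
    refine ⟨h1, funext fun j => ?_⟩
    exact (yext n s u).1 h2 j j.isLt

lemma c_AU : mval P (fun t => (t.1, t.2.1)) t = mval P (MM 0 n) t := by
  refine mval_congr (fun s u => ?_) t
  simp only [MM, Prod.mk.injEq]
  constructor
  · intro h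
    refine ⟨h, ?_, ?_⟩
    · rw [yext]; intro j hj; omega
    · rw [sext]; intro j hj; exact absurd hj (by have := j.isLt; omega)
  · rintro ⟨h, -, -⟩; exact h

lemma c_Y : mval P (fun t => t.2.2.2.2.2) t = mval P (yMask n) t := by
  refine mval_congr (fun s u => ?_) t
  constructor
  · intro h; rw [yext]; intro j _; rw [h]
  · intro h; exact funext fun j => (yext n s u).1 h j j.isLt

lemma c_j2 : mval P (fun t => (t.2.1, t.2.2.1, t.1)) t = mval P (MM 0 0) t := by
  refine mval_congr (fun s u => ?_) t
  simp only [MM, Prod.mk.injEq]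
  constructor
  · rintro ⟨h1, h2, h3⟩
    refine ⟨⟨h3, h1⟩, ?_, ?_⟩
    · rw [yext]; intro j hj; omega
    · rw [sext]; intro j _; rw [h2]
  · rintro ⟨⟨h3, h1⟩, -, h2⟩
    exact ⟨h1, funext fun j => (sext 0 s u).1 h2 j (Nat.zero_le _), h3⟩

lemma c_UA : mval P (fun t => (t.2.1, t.1)) t = mval P (MM 0 n) t := by
  refine mval_congr (fun s u => ?_) t
  simp only [MM, Prod.mk.injEq]
  constructor
  · rintro ⟨h1, h2⟩
    refine ⟨⟨h2, h1⟩, ?_, ?_⟩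
    · rw [yext]; intro j hj; omega
    · rw [sext]; intro j hj; exact absurd hj (by have := j.isLt; omega)
  · rintro ⟨⟨h2, h1⟩, -, -⟩; exact ⟨h1, h2⟩

lemma c_y0 : mval P (yMask 0) t = 1 := by
  have h : (yMask 0 : (Vec 𝒜 n × Vec 𝒰 n × Vec 𝒮e n × Vec 𝒮 n × Vec 𝒳 n × Vec 𝒴 n)
      → Vec (Option 𝒴) n) = fun _ => (fun _ => none) := by
    funext s j; simp [yMask]
  rw [h, mval_const]

lemma c_e1 (i : Fin n) :
    mval P (fun t => ((Ustar i t, t.1 i), t.2.2.2.2.2 i)) t =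
      mval P (MM ((i : ℕ) + 1) ((i : ℕ) + 1)) t := by
  refine mval_congr (fun s u => ?_) t
  simp only [MM, Ustar_eq, Prod.mk.injEq]
  constructor
  · rintro ⟨⟨⟨ha, hu, hs, hy⟩, -⟩, hyi⟩
    refine ⟨⟨ha, hu⟩, ?_, hs⟩
    rw [yext]; intro j hj
    rcases Nat.lt_succ_iff_lt_or_eq.1 hj with h | h
    · exact (yext _ s u).1 hy j h
    · have : j = i := Fin.ext h
      rw [this]; exact hyi
  · rintro ⟨⟨ha, hu⟩, hy, hs⟩
    have hyi : s.2.2.2.2.2 i = u.2.2.2.2.2 i :=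
      (yext _ s u).1 hy i (Nat.lt_succ_self _)
    refine ⟨⟨⟨ha, hu, hs, ?_⟩, congrFun ha i⟩, hyi⟩
    rw [yext]; intro j hj
    exact (yext _ s u).1 hy j (Nat.lt_succ_of_lt hj)

lemma c_ua (i : Fin n) :
    mval P (fun t => (Ustar i t, t.1 i)) t = mval P (MM (i : ℕ) ((i : ℕ) + 1)) t := by
  refine mval_congr (fun s u => ?_) t
  simp only [MM, Ustar_eq, Prod.mk.injEq]
  constructor
  · rintro ⟨⟨ha, hu, hs, hy⟩, -⟩
    exact ⟨⟨ha, hu⟩, hy, hs⟩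
  · rintro ⟨⟨ha, hu⟩, hy, hs⟩
    exact ⟨⟨ha, hu, hs, hy⟩, congrFun ha i⟩

lemma c_e2 (i : Fin n) :
    mval P (fun t => (t.2.2.1 i, Ustar i t, t.1 i)) t =
      mval P (MM (i : ℕ) (i : ℕ)) t := by
  refine mval_congr (fun s u => ?_) t
  simp only [MM, Ustar_eq, Prod.mk.injEq]
  constructor
  · rintro ⟨hsi, ⟨ha, hu, hs, hy⟩, -⟩
    refine ⟨⟨ha, hu⟩, hy, ?_⟩
    rw [sext]; intro j hj
    rcases Nat.eq_or_lt_of_le hj with h | h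
    · have : j = i := Fin.ext h.symm
      rw [this]; exact hsi
    · exact (sext _ s u).1 hs j h
  · rintro ⟨⟨ha, hu⟩, hy, hs⟩
    have hsi : s.2.2.1 i = u.2.2.1 i := (sext _ s u).1 hs i le_rfl
    refine ⟨hsi, ⟨ha, hu, ?_, hy⟩, congrFun ha i⟩
    rw [sext]; intro j hj
    exact (sext _ s u).1 hs j (le_of_lt hj)

lemma c_sl (i : Fin n) :
    mval P (fun t => (yMask (i : ℕ) t, t.2.2.2.2.2 i)) t =
      mval P (yMask ((i : ℕ) + 1)) t := by
  refine mval_congr (fun s u => ?_) t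
  simp only [Prod.mk.injEq]
  constructor
  · rintro ⟨hy, hyi⟩
    rw [yext]; intro j hj
    rcases Nat.lt_succ_iff_lt_or_eq.1 hj with h | h
    · exact (yext _ s u).1 hy j h
    · have : j = i := Fin.ext h
      rw [this]; exact hyi
  · intro hy
    refine ⟨?_, (yext _ s u).1 hy i (Nat.lt_succ_self _)⟩
    rw [yext]; intro j hj
    exact (yext _ s u).1 hy j (Nat.lt_succ_of_lt hj)

end Conv

section Support

variable (qs : 𝒜 → PMF (𝒮e × 𝒮))
variable (hq : ∀ (a : Vec 𝒜 n) (se : Vec 𝒮e n) (s : Vec 𝒮 n),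
      (qn a) (se, s) = ∏ i : Fin n, (qs (a i)) (se i, s i))

include hq in
lemma support_qs {t : Vec 𝒜 n × Vec 𝒰 n × Vec 𝒮e n × Vec 𝒮 n × Vec 𝒳 n × Vec 𝒴 n}
    (ht : convJoint PAU qn PX Wn t ≠ 0) (i : Fin n) :
    (qs (t.1 i)) (t.2.2.1 i, t.2.2.2.1 i) ≠ 0 := by
  have h : convJoint PAU qn PX Wn
      (t.1, t.2.1, t.2.2.1, t.2.2.2.1, t.2.2.2.2.1, t.2.2.2.2.2) ≠ 0 := ht
  rw [convJoint_apply] at h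
  have h2 := (mul_ne_zero_iff.1 h).2
  have h3 := (mul_ne_zero_iff.1 h2).1
  rw [hq] at h3
  exact Finset.prod_ne_zero_iff.1 h3 i (Finset.mem_univ i)

lemma qse_ne_zero {α : 𝒜} {σ : 𝒮e} {c : 𝒮} (h : (qs α) (σ, c) ≠ 0) :
    ((qs α).map Prod.fst) σ ≠ 0 := by
  rw [map_fst_apply]
  intro h0
  exact h (Finset.sum_eq_zero_iff.1 h0 c (Finset.mem_univ c))

include hq in
lemma qse_toReal_pos {t : Vec 𝒜 n × Vec 𝒰 n × Vec 𝒮e n × Vec 𝒮 n × Vec 𝒳 n × Vec 𝒴 n}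
    (ht : convJoint PAU qn PX Wn t ≠ 0) (i : Fin n) :
    0 < (((qs (t.1 i)).map Prod.fst) (t.2.2.1 i)).toReal :=
  ENNReal.toReal_pos (qse_ne_zero qs (support_qs PAU qn PX Wn qs hq ht i))
    (PMF.apply_ne_top _ _)

include hq in
lemma log_lsea {t : Vec 𝒜 n × Vec 𝒰 n × Vec 𝒮e n × Vec 𝒮 n × Vec 𝒳 n × Vec 𝒴 n}
    (ht : convJoint PAU qn PX Wn t ≠ 0) :
    Real.log (mval (convJoint PAU qn PX Wn) (fun t => (t.2.2.1, t.1)) t) =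
      Real.log (mval (convJoint PAU qn PX Wn) (fun t => t.1) t) +
        ∑ i : Fin n, Real.log ((((qs (t.1 i)).map Prod.fst) (t.2.2.1 i)).toReal) := by
  have h1 : mval (convJoint PAU qn PX Wn) (fun t => (t.2.2.1, t.1)) t =
      ((PAU.map Prod.fst) t.1).toReal *
        ∏ i : Fin n, (((qs (t.1 i)).map Prod.fst) (t.2.2.1 i)).toReal := by
    rw [mval, map_seA_apply PAU qn PX Wn qs hq, ENNReal.toReal_mul, ENNReal.toReal_prod]
  have h2 : mval (convJoint PAU qn PX Wn) (fun t => t.1) t =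
      ((PAU.map Prod.fst) t.1).toReal := by
    rw [mval, map_A_apply PAU qn PX Wn qs hq]
  have hPA : ((PAU.map Prod.fst) t.1).toReal ≠ 0 := by
    rw [← h2]; exact mval_ne_zero _ _ ht
  rw [h1, h2, Real.log_mul hPA ?_, Real.log_prod]
  · intro i _
    exact (qse_toReal_pos PAU qn PX Wn qs hq ht i).ne'
  · refine Finset.prod_ne_zero_iff.2 fun i _ => (qse_toReal_pos PAU qn PX Wn qs hq ht i).ne'

include hq in
lemma log_lseiai {t : Vec 𝒜 n × Vec 𝒰 n × Vec 𝒮e n × Vec 𝒮 n × Vec 𝒳 n × Vec 𝒴 n}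
    (ht : convJoint PAU qn PX Wn t ≠ 0) (i : Fin n) :
    Real.log (mval (convJoint PAU qn PX Wn) (fun t => (t.2.2.1 i, t.1 i)) t) =
      Real.log (mval (convJoint PAU qn PX Wn) (fun t => t.1 i) t) +
        Real.log ((((qs (t.1 i)).map Prod.fst) (t.2.2.1 i)).toReal) := by
  have h1 : mval (convJoint PAU qn PX Wn) (fun t => (t.2.2.1 i, t.1 i)) t =
      mval (convJoint PAU qn PX Wn) (fun t => t.1 i) t *
        (((qs (t.1 i)).map Prod.fst) (t.2.2.1 i)).toReal := by
    rw [mval, map_seiAi_apply PAU qn PX Wn qs hq, ENNReal.toReal_mul]; rfl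
  rw [h1, Real.log_mul (mval_ne_zero _ _ ht) (qse_toReal_pos PAU qn PX Wn qs hq ht i).ne']

include hq in
lemma big_ident (t : Vec 𝒜 n × Vec 𝒰 n × Vec 𝒮e n × Vec 𝒮 n × Vec 𝒳 n × Vec 𝒴 n)
    (ht : convJoint PAU qn PX Wn t ≠ 0) :
    infoDensity ((convJoint PAU qn PX Wn).map fun t => ((t.1, t.2.1), t.2.2.2.2.2))
        ((t.1, t.2.1), t.2.2.2.2.2)
      - condInfoDensity ((convJoint PAU qn PX Wn).map fun t => (t.2.1, t.2.2.1, t.1))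
        (t.2.1, t.2.2.1, t.1)
    = ∑ i : Fin n,
        (infoDensity ((convJoint PAU qn PX Wn).map fun t => ((Ustar i t, t.1 i), t.2.2.2.2.2 i))
            ((Ustar i t, t.1 i), t.2.2.2.2.2 i)
          - condInfoDensity ((convJoint PAU qn PX Wn).map fun t => (t.2.2.1 i, Ustar i t, t.1 i))
            (t.2.2.1 i, Ustar i t, t.1 i)
          - infoDensity ((convJoint PAU qn PX Wn).map fun t => (yMask (i : ℕ) t, t.2.2.2.2.2 i))
            (yMask (i : ℕ) t, t.2.2.2.2.2 i)) := by
  classical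
  set p := convJoint PAU qn PX Wn with hp
  have hID := fun {β₁ β₂ : Type} (g : _ → β₁ × β₂) => infoDensity_map p g ht
  have hCD := fun {β₁ β₂ β₃ : Type} (g : _ → β₁ × β₂ × β₃) => condInfoDensity_map p g ht
  simp only [hID, hCD]
  simp only [c_j1 p t, c_AU p t, c_Y p t, c_j2 p t, c_UA p t, c_e1 p t, c_ua p t, c_e2 p t,
    c_sl p t]
  have tel1 : ∑ i : Fin n, (Real.log (mval p (MM ((i : ℕ) + 1) ((i : ℕ) + 1)) t)
        - Real.log (mval p (MM (i : ℕ) (i : ℕ)) t))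
      = Real.log (mval p (MM n n) t) - Real.log (mval p (MM 0 0) t) := by
    rw [Fin.sum_univ_eq_sum_range (fun k => Real.log (mval p (MM (k + 1) (k + 1)) t)
        - Real.log (mval p (MM k k) t)) n,
      Finset.sum_range_sub (fun k => Real.log (mval p (MM k k) t))]
  have tel2 : ∑ i : Fin n, (Real.log (mval p (yMask ((i : ℕ) + 1)) t)
        - Real.log (mval p (yMask (i : ℕ)) t))
      = Real.log (mval p (yMask n) t) - Real.log (mval p (yMask 0) t) := by
    rw [Fin.sum_univ_eq_sum_range (fun k => Real.log (mval p (yMask (k + 1)) t)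
        - Real.log (mval p (yMask k) t)) n,
      Finset.sum_range_sub (fun k => Real.log (mval p (yMask k) t))]
  have h0 : Real.log (mval p (yMask 0) t) = 0 := by rw [c_y0]; exact Real.log_one
  have hsea := log_lsea PAU qn PX Wn qs hq ht
  have hsei : ∑ i : Fin n, (Real.log (mval p (fun t => (t.2.2.1 i, t.1 i)) t)
        - Real.log (mval p (fun t => t.1 i) t))
      = ∑ i : Fin n, Real.log ((((qs (t.1 i)).map Prod.fst) (t.2.2.1 i)).toReal) := by
    refine Finset.sum_congr rfl fun i _ => ?_
    rw [log_lseiai PAU qn PX Wn qs hq ht i]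
    ring
  rw [show ∑ i : Fin n,
        (Real.log (mval p (MM ((i : ℕ) + 1) ((i : ℕ) + 1)) t)
            - Real.log (mval p (MM (i : ℕ) ((i : ℕ) + 1)) t)
            - Real.log (mval p (fun t => t.2.2.2.2.2 i) t)
          - (Real.log (mval p (MM (i : ℕ) (i : ℕ)) t)
              + Real.log (mval p (fun t => t.1 i) t)
              - Real.log (mval p (fun t => (t.2.2.1 i, t.1 i)) t)
              - Real.log (mval p (MM (i : ℕ) ((i : ℕ) + 1)) t))
          - (Real.log (mval p (yMask ((i : ℕ) + 1)) t)
              - Real.log (mval p (yMask (i : ℕ)) t)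
              - Real.log (mval p (fun t => t.2.2.2.2.2 i) t)))
      = ∑ i : Fin n,
          ((Real.log (mval p (MM ((i : ℕ) + 1) ((i : ℕ) + 1)) t)
              - Real.log (mval p (MM (i : ℕ) (i : ℕ)) t))
            - (Real.log (mval p (yMask ((i : ℕ) + 1)) t)
              - Real.log (mval p (yMask (i : ℕ)) t))
            + (Real.log (mval p (fun t => (t.2.2.1 i, t.1 i)) t)
              - Real.log (mval p (fun t => t.1 i) t)))
      from Finset.sum_congr rfl fun i _ => by ring]
  rw [Finset.sum_add_distrib, Finset.sum_sub_distrib, tel1, tel2, hsei, h0]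
  rw [hsea]
  ring

include hq in
lemma goal1 :
    mutInfo ((convJoint PAU qn PX Wn).map fun t => ((t.1, t.2.1), t.2.2.2.2.2)) -
        condMutInfo ((convJoint PAU qn PX Wn).map fun t => (t.2.1, t.2.2.1, t.1)) ≤
      ∑ i : Fin n,
        (mutInfo ((convJoint PAU qn PX Wn).map fun t => ((Ustar i t, t.1 i), t.2.2.2.2.2 i)) -
          condMutInfo ((convJoint PAU qn PX Wn).map fun t => (t.2.2.1 i, Ustar i t, t.1 i))) := by
  classical
  set p := convJoint PAU qn PX Wn with hp
  have hL : mutInfo (p.map fun t => ((t.1, t.2.1), t.2.2.2.2.2)) -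
      condMutInfo (p.map fun t => (t.2.1, t.2.2.1, t.1)) =
      ∑ t, (p t).toReal *
        (infoDensity (p.map fun t => ((t.1, t.2.1), t.2.2.2.2.2)) ((t.1, t.2.1), t.2.2.2.2.2)
          - condInfoDensity (p.map fun t => (t.2.1, t.2.2.1, t.1)) (t.2.1, t.2.2.1, t.1)) := by
    rw [mutInfo_map_eq, condMutInfo_map_eq, ← Finset.sum_sub_distrib]
    exact Finset.sum_congr rfl fun t _ => (mul_sub _ _ _).symm
  have hR : (∑ i : Fin n,
        (mutInfo (p.map fun t => ((Ustar i t, t.1 i), t.2.2.2.2.2 i)) -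
          condMutInfo (p.map fun t => (t.2.2.1 i, Ustar i t, t.1 i)))) -
      ∑ i : Fin n, mutInfo (p.map fun t => (yMask (i : ℕ) t, t.2.2.2.2.2 i)) =
      ∑ t, (p t).toReal * (∑ i : Fin n,
        (infoDensity (p.map fun t => ((Ustar i t, t.1 i), t.2.2.2.2.2 i))
            ((Ustar i t, t.1 i), t.2.2.2.2.2 i)
          - condInfoDensity (p.map fun t => (t.2.2.1 i, Ustar i t, t.1 i))
            (t.2.2.1 i, Ustar i t, t.1 i)
          - infoDensity (p.map fun t => (yMask (i : ℕ) t, t.2.2.2.2.2 i))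
            (yMask (i : ℕ) t, t.2.2.2.2.2 i))) := by
    rw [← Finset.sum_sub_distrib]
    calc ∑ i : Fin n,
          (mutInfo (p.map fun t => ((Ustar i t, t.1 i), t.2.2.2.2.2 i)) -
            condMutInfo (p.map fun t => (t.2.2.1 i, Ustar i t, t.1 i)) -
            mutInfo (p.map fun t => (yMask (i : ℕ) t, t.2.2.2.2.2 i)))
        = ∑ i : Fin n, ∑ t, ((p t).toReal *
            infoDensity (p.map fun t => ((Ustar i t, t.1 i), t.2.2.2.2.2 i))
              ((Ustar i t, t.1 i), t.2.2.2.2.2 i)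
          - (p t).toReal * condInfoDensity (p.map fun t => (t.2.2.1 i, Ustar i t, t.1 i))
              (t.2.2.1 i, Ustar i t, t.1 i)
          - (p t).toReal * infoDensity (p.map fun t => (yMask (i : ℕ) t, t.2.2.2.2.2 i))
              (yMask (i : ℕ) t, t.2.2.2.2.2 i)) := by
          refine Finset.sum_congr rfl fun i _ => ?_
          rw [mutInfo_map_eq, condMutInfo_map_eq, mutInfo_map_eq,
            Finset.sum_sub_distrib, Finset.sum_sub_distrib]
      _ = ∑ t, ∑ i : Fin n, ((p t).toReal *
            infoDensity (p.map fun t => ((Ustar i t, t.1 i), t.2.2.2.2.2 i))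
              ((Ustar i t, t.1 i), t.2.2.2.2.2 i)
          - (p t).toReal * condInfoDensity (p.map fun t => (t.2.2.1 i, Ustar i t, t.1 i))
              (t.2.2.1 i, Ustar i t, t.1 i)
          - (p t).toReal * infoDensity (p.map fun t => (yMask (i : ℕ) t, t.2.2.2.2.2 i))
              (yMask (i : ℕ) t, t.2.2.2.2.2 i)) := Finset.sum_comm
      _ = _ := by
          refine Finset.sum_congr rfl fun t _ => ?_
          rw [Finset.mul_sum]
          exact Finset.sum_congr rfl fun i _ => by ring
  have key : mutInfo (p.map fun t => ((t.1, t.2.1), t.2.2.2.2.2)) -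
      condMutInfo (p.map fun t => (t.2.1, t.2.2.1, t.1)) =
      (∑ i : Fin n,
        (mutInfo (p.map fun t => ((Ustar i t, t.1 i), t.2.2.2.2.2 i)) -
          condMutInfo (p.map fun t => (t.2.2.1 i, Ustar i t, t.1 i)))) -
      ∑ i : Fin n, mutInfo (p.map fun t => (yMask (i : ℕ) t, t.2.2.2.2.2 i)) := by
    rw [hL, hR]
    refine Finset.sum_congr rfl fun t _ => ?_
    by_cases hpt : p t = 0
    · rw [hpt]; simp
    · exact congrArg _ (big_ident PAU qn PX Wn qs hq t hpt)
  have hslack : 0 ≤ ∑ i : Fin n, mutInfo (p.map fun t => (yMask (i : ℕ) t, t.2.2.2.2.2 i)) :=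
    Finset.sum_nonneg fun i _ => mutInfo_nonneg _
  linarith [key]

end Support

section Mix

variable (qs : 𝒜 → PMF (𝒮e × 𝒮))
variable (hq : ∀ (a : Vec 𝒜 n) (se : Vec 𝒮e n) (s : Vec 𝒮 n),
      (qn a) (se, s) = ∏ i : Fin n, (qs (a i)) (se i, s i))
variable (hn : 0 < n)

lemma uniformFin_apply (i : Fin n) : uniformFin n hn i = ((n : ℝ≥0∞))⁻¹ := by
  simp [uniformFin, PMF.uniformOfFintype_apply]

lemma bind_tag {ι α γ : Type} [Fintype α] (q : PMF ι) (p : PMF α) (h : ι → α → γ)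
    (tag : γ → ι) (htag : ∀ j s, tag (h j s) = j) (i : ι) (w : γ) (hw : tag w = i) :
    (q.bind fun j => p.map (h j)) w = q i * (p.map (h i)) w := by
  rw [PMF.bind_apply]
  refine tsum_eq_single i fun j hj => ?_
  have hz : (p.map (h j)) w = 0 := by
    rw [PMF.map_apply]
    refine ENNReal.tsum_eq_zero.2 fun s => ?_
    rw [if_neg]
    intro hws
    apply hj
    rw [← hw, hws, htag]
  rw [hz, mul_zero]

lemma bind_le {ι α : Type} (q : PMF ι) (h : ι → PMF α) (i : ι) (w : α) :
    q i * (h i) w ≤ (q.bind h) w := by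
  rw [PMF.bind_apply]
  exact ENNReal.le_tsum i

lemma ninv_ne_zero : ((n : ℝ≥0∞))⁻¹ ≠ 0 := by
  simp

lemma ninv_toReal : (((n : ℝ≥0∞))⁻¹).toReal = ((n : ℝ))⁻¹ := by
  rw [ENNReal.toReal_inv]
  norm_num

include hn in
lemma ninv_toReal_pos : 0 < (((n : ℝ≥0∞))⁻¹).toReal := by
  rw [ninv_toReal]
  positivity

lemma mval_seiAi
    (hq : ∀ (a : Vec 𝒜 n) (se : Vec 𝒮e n) (s : Vec 𝒮 n),
      (qn a) (se, s) = ∏ i : Fin n, (qs (a i)) (se i, s i))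
    (t : Vec 𝒜 n × Vec 𝒰 n × Vec 𝒮e n × Vec 𝒮 n × Vec 𝒳 n × Vec 𝒴 n) (i : Fin n) :
    mval (convJoint PAU qn PX Wn) (fun t => (t.2.2.1 i, t.1 i)) t =
      mval (convJoint PAU qn PX Wn) (fun t => t.1 i) t *
        (((qs (t.1 i)).map Prod.fst) (t.2.2.1 i)).toReal := by
  rw [mval, map_seiAi_apply PAU qn PX Wn qs hq, ENNReal.toReal_mul]
  rfl

set_option maxHeartbeats 2000000 in
include hq in
lemma mixC_density (i : Fin n)
    (t : Vec 𝒜 n × Vec 𝒰 n × Vec 𝒮e n × Vec 𝒮 n × Vec 𝒳 n × Vec 𝒴 n)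
    (ht : convJoint PAU qn PX Wn t ≠ 0) :
    condInfoDensity ((uniformFin n hn).bind fun j => (convJoint PAU qn PX Wn).map fun t =>
        ((Ustar j t, j), t.2.2.1 j, t.1 j))
      ((Ustar i t, i), t.2.2.1 i, t.1 i)
    = condInfoDensity ((convJoint PAU qn PX Wn).map fun t => (t.2.2.1 i, Ustar i t, t.1 i))
        (t.2.2.1 i, Ustar i t, t.1 i) := by
  classical
  set p := convJoint PAU qn PX Wn with hp
  set q := uniformFin n hn with hqdef
  set nr := ((n : ℝ≥0∞))⁻¹ with hnr
  -- mixture marginal identifications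
  have h3eq : ((q.bind fun j => p.map fun t => ((Ustar j t, j), t.2.2.1 j, t.1 j)).map
      fun v => v.2.2) = q.bind fun j => p.map fun t => t.1 j := by
    rw [PMF.map_bind]
    exact congrArg _ (funext fun j => (PMF.map_comp _ p _).trans rfl)
  have h13eq : ((q.bind fun j => p.map fun t => ((Ustar j t, j), t.2.2.1 j, t.1 j)).map
      fun v => (v.1, v.2.2)) = q.bind fun j => p.map fun t => ((Ustar j t, j), t.1 j) := by
    rw [PMF.map_bind]
    exact congrArg _ (funext fun j => (PMF.map_comp _ p _).trans rfl)
  have h23eq : ((q.bind fun j => p.map fun t => ((Ustar j t, j), t.2.2.1 j, t.1 j)).map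
      fun v => (v.2.1, v.2.2)) = q.bind fun j => p.map fun t => (t.2.2.1 j, t.1 j) := by
    rw [PMF.map_bind]
    exact congrArg _ (funext fun j => (PMF.map_comp _ p _).trans rfl)
  -- values
  have hfull : (q.bind fun j => p.map fun t => ((Ustar j t, j), t.2.2.1 j, t.1 j))
      ((Ustar i t, i), t.2.2.1 i, t.1 i) =
      nr * (p.map fun t => ((Ustar i t, i), t.2.2.1 i, t.1 i))
        ((Ustar i t, i), t.2.2.1 i, t.1 i) := by
    rw [bind_tag q p (fun j t => ((Ustar j t, j), t.2.2.1 j, t.1 j))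
      (fun w => w.1.2) (fun j s => rfl) i (((Ustar i t, i), t.2.2.1 i, t.1 i)) rfl,
      uniformFin_apply (hn := hn)]
  have h13 : (q.bind fun j => p.map fun t => ((Ustar j t, j), t.1 j))
      ((Ustar i t, i), t.1 i) =
      nr * (p.map fun t => ((Ustar i t, i), t.1 i)) ((Ustar i t, i), t.1 i) := by
    rw [bind_tag q p (fun j t => ((Ustar j t, j), t.1 j))
      (fun w => w.1.2) (fun j s => rfl) i (((Ustar i t, i), t.1 i)) rfl,
      uniformFin_apply (hn := hn)]
  have hstat : (q.bind fun j => p.map fun t => (t.2.2.1 j, t.1 j)) (t.2.2.1 i, t.1 i) =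
      ((q.bind fun j => p.map fun t => t.1 j) (t.1 i)) *
        ((qs (t.1 i)).map Prod.fst) (t.2.2.1 i) := by
    rw [PMF.bind_apply, PMF.bind_apply, ← ENNReal.tsum_mul_right]
    refine tsum_congr fun j => ?_
    rw [map_seiAi_apply PAU qn PX Wn qs hq j (t.2.2.1 i) (t.1 i), mul_assoc]
  -- RHS marginal identifications
  have r3 : ((p.map fun t => (t.2.2.1 i, Ustar i t, t.1 i)).map fun v => v.2.2) =
      p.map fun t => t.1 i := (PMF.map_comp _ p _).trans rfl
  have r13 : ((p.map fun t => (t.2.2.1 i, Ustar i t, t.1 i)).map fun v => (v.1, v.2.2)) =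
      p.map fun t => (t.2.2.1 i, t.1 i) := (PMF.map_comp _ p _).trans rfl
  have r23 : ((p.map fun t => (t.2.2.1 i, Ustar i t, t.1 i)).map fun v => (v.2.1, v.2.2)) =
      p.map fun t => (Ustar i t, t.1 i) := (PMF.map_comp _ p _).trans rfl
  simp only [condInfoDensity]
  rw [hfull, h3eq, h13eq, h13, h23eq, hstat, r3, r13, r23]
  rw [ENNReal.toReal_mul, ENNReal.toReal_mul, ENNReal.toReal_mul]
  -- convert to mval form
  have e1 : ((p.map fun t => ((Ustar i t, i), t.2.2.1 i, t.1 i))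
      ((Ustar i t, i), t.2.2.1 i, t.1 i)).toReal =
      mval p (fun t => ((Ustar i t, i), t.2.2.1 i, t.1 i)) t := rfl
  have e2 : ((p.map fun t => ((Ustar i t, i), t.1 i)) ((Ustar i t, i), t.1 i)).toReal =
      mval p (fun t => ((Ustar i t, i), t.1 i)) t := rfl
  have e3 : ((p.map fun t => t.1 i) (t.1 i)).toReal = mval p (fun t => t.1 i) t := rfl
  have e4 : ((p.map fun t => (t.2.2.1 i, t.1 i)) (t.2.2.1 i, t.1 i)).toReal =
      mval p (fun t => (t.2.2.1 i, t.1 i)) t := rfl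
  have e5 : ((p.map fun t => (t.2.2.1 i, Ustar i t, t.1 i))
      (t.2.2.1 i, Ustar i t, t.1 i)).toReal =
      mval p (fun t => (t.2.2.1 i, Ustar i t, t.1 i)) t := rfl
  have e6 : ((p.map fun t => (Ustar i t, t.1 i)) (Ustar i t, t.1 i)).toReal =
      mval p (fun t => (Ustar i t, t.1 i)) t := rfl
  rw [e1, e2, e3, e4, e5, e6]
  -- identify tagged with untagged mvals
  have hA : mval p (fun t => ((Ustar i t, i), t.2.2.1 i, t.1 i)) t =
      mval p (fun t => (t.2.2.1 i, Ustar i t, t.1 i)) t :=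
    mval_comp_inj p (f := fun t => (t.2.2.1 i, Ustar i t, t.1 i))
      (fun v => ((v.2.1, i), v.1, v.2.2)) (fun a b h => by
        simp only [Prod.mk.injEq] at h
        exact Prod.ext h.2.1 (Prod.ext h.1.1 h.2.2)) t
  have hB : mval p (fun t => ((Ustar i t, i), t.1 i)) t =
      mval p (fun t => (Ustar i t, t.1 i)) t :=
    mval_comp_inj p (f := fun t => (Ustar i t, t.1 i))
      (fun v => ((v.1, i), v.2)) (fun a b h => by
        simp only [Prod.mk.injEq] at h
        exact Prod.ext h.1.1 h.2) t
  rw [hA, hB, mval_seiAi PAU qn PX Wn qs hq t i]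
  -- positivity
  have hapos : 0 < mval p (fun t => (t.2.2.1 i, Ustar i t, t.1 i)) t := mval_pos p _ ht
  have hbpos : 0 < mval p (fun t => (Ustar i t, t.1 i)) t := mval_pos p _ ht
  have hfpos : 0 < mval p (fun t => t.1 i) t := mval_pos p _ ht
  have hepos : 0 < (((qs (t.1 i)).map Prod.fst) (t.2.2.1 i)).toReal :=
    qse_toReal_pos PAU qn PX Wn qs hq ht i
  have hnrpos : 0 < nr.toReal := ninv_toReal_pos hn
  have hD0 : (q.bind fun j => p.map fun t => t.1 j) (t.1 i) ≠ 0 := by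
    intro h0
    have hle := bind_le q (fun j => p.map fun t => t.1 j) i (t.1 i)
    rw [h0] at hle
    have hz := le_antisymm hle zero_le
    rw [uniformFin_apply (hn := hn)] at hz
    rcases mul_eq_zero.1 hz with h | h
    · exact ninv_ne_zero h
    · have : mval p (fun t => t.1 i) t = 0 := by rw [mval, h, ENNReal.toReal_zero]
      exact hfpos.ne' this
  have hdpos : 0 < ((q.bind fun j => p.map fun t => t.1 j) (t.1 i)).toReal :=
    ENNReal.toReal_pos hD0 (PMF.apply_ne_top _ _)
  -- final real computation
  set a := mval p (fun t => (t.2.2.1 i, Ustar i t, t.1 i)) t with hsa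
  set b := mval p (fun t => (Ustar i t, t.1 i)) t with hsb
  set f := mval p (fun t => t.1 i) t with hsf
  set e := (((qs (t.1 i)).map Prod.fst) (t.2.2.1 i)).toReal with hse
  set d := ((q.bind fun j => p.map fun t => t.1 j) (t.1 i)).toReal with hsd
  set m := nr.toReal with hsm
  congr 1
  field_simp
set_option maxHeartbeats 2000000 in
include hq in
lemma mixJ_density (i : Fin n)
    (t : Vec 𝒜 n × Vec 𝒰 n × Vec 𝒮e n × Vec 𝒮 n × Vec 𝒳 n × Vec 𝒴 n)
    (ht : convJoint PAU qn PX Wn t ≠ 0) :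
    infoDensity ((uniformFin n hn).bind fun j => (convJoint PAU qn PX Wn).map fun t =>
        (((Ustar j t, j), t.1 j), t.2.2.2.2.2 j))
      (((Ustar i t, i), t.1 i), t.2.2.2.2.2 i)
    = infoDensity ((convJoint PAU qn PX Wn).map fun t => ((Ustar i t, t.1 i), t.2.2.2.2.2 i))
        ((Ustar i t, t.1 i), t.2.2.2.2.2 i)
      + infoDensity ((uniformFin n hn).bind fun j => (convJoint PAU qn PX Wn).map fun t =>
          (j, t.2.2.2.2.2 j)) (i, t.2.2.2.2.2 i) := by
  classical
  set p := convJoint PAU qn PX Wn with hp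
  set q := uniformFin n hn with hqdef
  set nr := ((n : ℝ≥0∞))⁻¹ with hnr
  -- marginal identifications
  have hfsteq : ((q.bind fun j => p.map fun t => (((Ustar j t, j), t.1 j), t.2.2.2.2.2 j)).map
      Prod.fst) = q.bind fun j => p.map fun t => ((Ustar j t, j), t.1 j) := by
    rw [PMF.map_bind]
    exact congrArg _ (funext fun j => (PMF.map_comp _ p _).trans rfl)
  have hsndeq : ((q.bind fun j => p.map fun t => (((Ustar j t, j), t.1 j), t.2.2.2.2.2 j)).map
      Prod.snd) = q.bind fun j => p.map fun t => t.2.2.2.2.2 j := by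
    rw [PMF.map_bind]
    exact congrArg _ (funext fun j => (PMF.map_comp _ p _).trans rfl)
  have hqfsteq : ((q.bind fun j => p.map fun t => ((j : Fin n), t.2.2.2.2.2 j)).map
      Prod.fst) = q := by
    rw [PMF.map_bind]
    have h1 : ∀ j : Fin n, ((p.map fun t => ((j : Fin n), t.2.2.2.2.2 j)).map Prod.fst)
        = PMF.pure j := fun j => (PMF.map_comp _ p _).trans (PMF.map_const p j)
    calc q.bind (fun j => ((p.map fun t => ((j : Fin n), t.2.2.2.2.2 j)).map Prod.fst))
        = q.bind PMF.pure := congrArg _ (funext fun j => h1 j)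
      _ = q := PMF.bind_pure q
  have hqsndeq : ((q.bind fun j => p.map fun t => ((j : Fin n), t.2.2.2.2.2 j)).map
      Prod.snd) = q.bind fun j => p.map fun t => t.2.2.2.2.2 j := by
    rw [PMF.map_bind]
    exact congrArg _ (funext fun j => (PMF.map_comp _ p _).trans rfl)
  -- values
  have hfull : (q.bind fun j => p.map fun t => (((Ustar j t, j), t.1 j), t.2.2.2.2.2 j))
      (((Ustar i t, i), t.1 i), t.2.2.2.2.2 i) =
      nr * (p.map fun t => (((Ustar i t, i), t.1 i), t.2.2.2.2.2 i))
        (((Ustar i t, i), t.1 i), t.2.2.2.2.2 i) := by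
    rw [bind_tag q p (fun j t => (((Ustar j t, j), t.1 j), t.2.2.2.2.2 j))
      (fun w => w.1.1.2) (fun j s => rfl) i ((((Ustar i t, i), t.1 i), t.2.2.2.2.2 i)) rfl,
      uniformFin_apply (hn := hn)]
  have hfstv : (q.bind fun j => p.map fun t => ((Ustar j t, j), t.1 j))
      ((Ustar i t, i), t.1 i) =
      nr * (p.map fun t => ((Ustar i t, i), t.1 i)) ((Ustar i t, i), t.1 i) := by
    rw [bind_tag q p (fun j t => ((Ustar j t, j), t.1 j))
      (fun w => w.1.2) (fun j s => rfl) i (((Ustar i t, i), t.1 i)) rfl,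
      uniformFin_apply (hn := hn)]
  have hqfull : (q.bind fun j => p.map fun t => ((j : Fin n), t.2.2.2.2.2 j))
      (i, t.2.2.2.2.2 i) =
      nr * (p.map fun t => ((i : Fin n), t.2.2.2.2.2 i)) (i, t.2.2.2.2.2 i) := by
    rw [bind_tag q p (fun j t => ((j : Fin n), t.2.2.2.2.2 j))
      (fun w => w.1) (fun j s => rfl) i ((i, t.2.2.2.2.2 i)) rfl,
      uniformFin_apply (hn := hn)]
  -- RHS marginals
  have rfst : ((p.map fun t => ((Ustar i t, t.1 i), t.2.2.2.2.2 i)).map Prod.fst) =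
      p.map fun t => (Ustar i t, t.1 i) := (PMF.map_comp _ p _).trans rfl
  have rsnd : ((p.map fun t => ((Ustar i t, t.1 i), t.2.2.2.2.2 i)).map Prod.snd) =
      p.map fun t => t.2.2.2.2.2 i := (PMF.map_comp _ p _).trans rfl
  simp only [infoDensity]
  rw [hfull, hfsteq, hfstv, hsndeq, hqfull, hqfsteq, hqsndeq, rfst, rsnd,
    uniformFin_apply (hn := hn)]
  rw [ENNReal.toReal_mul, ENNReal.toReal_mul, ENNReal.toReal_mul]
  -- mval conversions
  have e1 : ((p.map fun t => (((Ustar i t, i), t.1 i), t.2.2.2.2.2 i))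
      (((Ustar i t, i), t.1 i), t.2.2.2.2.2 i)).toReal =
      mval p (fun t => (((Ustar i t, i), t.1 i), t.2.2.2.2.2 i)) t := rfl
  have e2 : ((p.map fun t => ((Ustar i t, i), t.1 i)) ((Ustar i t, i), t.1 i)).toReal =
      mval p (fun t => ((Ustar i t, i), t.1 i)) t := rfl
  have e3 : ((p.map fun t => ((i : Fin n), t.2.2.2.2.2 i)) (i, t.2.2.2.2.2 i)).toReal =
      mval p (fun t => ((i : Fin n), t.2.2.2.2.2 i)) t := rfl
  have e4 : ((p.map fun t => ((Ustar i t, t.1 i), t.2.2.2.2.2 i))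
      ((Ustar i t, t.1 i), t.2.2.2.2.2 i)).toReal =
      mval p (fun t => ((Ustar i t, t.1 i), t.2.2.2.2.2 i)) t := rfl
  have e5 : ((p.map fun t => (Ustar i t, t.1 i)) (Ustar i t, t.1 i)).toReal =
      mval p (fun t => (Ustar i t, t.1 i)) t := rfl
  have e6 : ((p.map fun t => t.2.2.2.2.2 i) (t.2.2.2.2.2 i)).toReal =
      mval p (fun t => t.2.2.2.2.2 i) t := rfl
  rw [e1, e2, e3, e4, e5, e6]
  have hA : mval p (fun t => (((Ustar i t, i), t.1 i), t.2.2.2.2.2 i)) t =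
      mval p (fun t => ((Ustar i t, t.1 i), t.2.2.2.2.2 i)) t :=
    mval_comp_inj p (f := fun t => ((Ustar i t, t.1 i), t.2.2.2.2.2 i))
      (fun v => (((v.1.1, i), v.1.2), v.2)) (fun a b h => by
        simp only [Prod.mk.injEq] at h
        exact Prod.ext (Prod.ext h.1.1.1 h.1.2) h.2) t
  have hB : mval p (fun t => ((Ustar i t, i), t.1 i)) t =
      mval p (fun t => (Ustar i t, t.1 i)) t :=
    mval_comp_inj p (f := fun t => (Ustar i t, t.1 i))
      (fun v => ((v.1, i), v.2)) (fun a b h => by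
        simp only [Prod.mk.injEq] at h
        exact Prod.ext h.1.1 h.2) t
  have hC : mval p (fun t => ((i : Fin n), t.2.2.2.2.2 i)) t =
      mval p (fun t => t.2.2.2.2.2 i) t :=
    mval_comp_inj p (f := fun t => t.2.2.2.2.2 i)
      (fun y => ((i : Fin n), y)) (fun a b h => by
        simp only [Prod.mk.injEq] at h
        exact h.2) t
  rw [hA, hB, hC]
  -- positivity
  have hapos : 0 < mval p (fun t => ((Ustar i t, t.1 i), t.2.2.2.2.2 i)) t := mval_pos p _ ht
  have hbpos : 0 < mval p (fun t => (Ustar i t, t.1 i)) t := mval_pos p _ ht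
  have hyvpos : 0 < mval p (fun t => t.2.2.2.2.2 i) t := mval_pos p _ ht
  have hnrpos : 0 < nr.toReal := ninv_toReal_pos hn
  have hC0 : (q.bind fun j => p.map fun t => t.2.2.2.2.2 j) (t.2.2.2.2.2 i) ≠ 0 := by
    intro h0
    have hle := bind_le q (fun j => p.map fun t => t.2.2.2.2.2 j) i (t.2.2.2.2.2 i)
    rw [h0] at hle
    have hz := le_antisymm hle zero_le
    rw [uniformFin_apply (hn := hn)] at hz
    rcases mul_eq_zero.1 hz with h | h
    · exact ninv_ne_zero h
    · have : mval p (fun t => t.2.2.2.2.2 i) t = 0 := by rw [mval, h, ENNReal.toReal_zero]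
      exact hyvpos.ne' this
  have hcpos : 0 < ((q.bind fun j => p.map fun t => t.2.2.2.2.2 j) (t.2.2.2.2.2 i)).toReal :=
    ENNReal.toReal_pos hC0 (PMF.apply_ne_top _ _)
  set a := mval p (fun t => ((Ustar i t, t.1 i), t.2.2.2.2.2 i)) t with hsa
  set b := mval p (fun t => (Ustar i t, t.1 i)) t with hsb
  set yv := mval p (fun t => t.2.2.2.2.2 i) t with hsyv
  set c := ((q.bind fun j => p.map fun t => t.2.2.2.2.2 j) (t.2.2.2.2.2 i)).toReal with hsc
  set m := nr.toReal with hsm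
  rw [← Real.log_mul (div_ne_zero hapos.ne' (mul_ne_zero hbpos.ne' hyvpos.ne'))
    (div_ne_zero (mul_ne_zero hnrpos.ne' hyvpos.ne') (mul_ne_zero hnrpos.ne' hcpos.ne'))]
  congr 1
  field_simp

include hq in
lemma mixC_eq :
    condMutInfo ((uniformFin n hn).bind fun j => (convJoint PAU qn PX Wn).map fun t =>
        ((Ustar j t, j), t.2.2.1 j, t.1 j)) =
      ((n : ℝ))⁻¹ * ∑ i : Fin n,
        condMutInfo ((convJoint PAU qn PX Wn).map fun t => (t.2.2.1 i, Ustar i t, t.1 i)) := by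
  classical
  set p := convJoint PAU qn PX Wn with hp
  set q := uniformFin n hn with hqdef
  rw [condMutInfo, expect_bind, Finset.mul_sum]
  refine Finset.sum_congr rfl fun i _ => ?_
  rw [expect_map, uniformFin_apply (hn := hn), ninv_toReal, condMutInfo_map_eq]
  congr 1
  refine Finset.sum_congr rfl fun t _ => ?_
  by_cases hpt : p t = 0
  · rw [hpt]; simp
  · exact congrArg _ (mixC_density PAU qn PX Wn qs hq hn i t hpt)

include hq in
lemma mixJ_eq :
    mutInfo ((uniformFin n hn).bind fun j => (convJoint PAU qn PX Wn).map fun t =>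
        (((Ustar j t, j), t.1 j), t.2.2.2.2.2 j)) =
      ((n : ℝ))⁻¹ * (∑ i : Fin n,
        mutInfo ((convJoint PAU qn PX Wn).map fun t => ((Ustar i t, t.1 i), t.2.2.2.2.2 i)))
      + mutInfo ((uniformFin n hn).bind fun j => (convJoint PAU qn PX Wn).map fun t =>
          ((j : Fin n), t.2.2.2.2.2 j)) := by
  classical
  set p := convJoint PAU qn PX Wn with hp
  set q := uniformFin n hn with hqdef
  rw [mutInfo, expect_bind]
  rw [show mutInfo (q.bind fun j => p.map fun t => ((j : Fin n), t.2.2.2.2.2 j)) =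
      ∑ i : Fin n, (q i).toReal * expect (p.map fun t => ((i : Fin n), t.2.2.2.2.2 i))
        (infoDensity (q.bind fun j => p.map fun t => ((j : Fin n), t.2.2.2.2.2 j)))
    from by rw [mutInfo, expect_bind]]
  rw [Finset.mul_sum, ← Finset.sum_add_distrib]
  refine Finset.sum_congr rfl fun i _ => ?_
  rw [expect_map, expect_map, uniformFin_apply (hn := hn), ninv_toReal, mutInfo_map_eq,
    ← mul_add]
  congr 1
  rw [← Finset.sum_add_distrib]
  refine Finset.sum_congr rfl fun t _ => ?_
  by_cases hpt : p t = 0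
  · rw [hpt]; simp
  · rw [← mul_add]
    exact congrArg _ (mixJ_density PAU qn PX Wn qs hq hn i t hpt)

end Mix

end Ident


/-- **Single-letterization for the converse** (via the Csiszár sum identity). For a
joint law of the form
`P_{A^n U^n} ∏_i P_{S_e S|A} P_{X^n|U^n S_e^n} ∏_i P_{Y|XS}` (stationary memoryless state
generation and channel) and `U*_i = (A^n, U^n, S_{e,i+1}^n, Y^{i−1})`,
`(1/n)[I(A^n,U^n;Y^n) − I(U^n;S_e^n|A^n)] ≤ (1/n) Σ_i [I(U*_i,A_i;Y_i) − I(S_{e,i};U*_i|A_i)]`,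
and with `Q` uniform on `{1,…,n}`, `U = (U*_Q, Q)`, `A = A_Q`, `S_e = S_{e,Q}`, `Y = Y_Q`,
the right-hand side is at most `I(U,A;Y) − I(U;S_e|A)`. -/
theorem single_letterization
    (𝒜 𝒰 𝒮e 𝒮 𝒳 𝒴 : Type)
    [Fintype 𝒜] [Fintype 𝒰] [Fintype 𝒮e] [Fintype 𝒮] [Fintype 𝒳] [Fintype 𝒴]
    (n : ℕ) (hn : 0 < n)
    (PAU : PMF (Vec 𝒜 n × Vec 𝒰 n))
    (qn : Vec 𝒜 n → PMF (Vec 𝒮e n × Vec 𝒮 n))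
    (qs : 𝒜 → PMF (𝒮e × 𝒮))
    (PX : Vec 𝒰 n × Vec 𝒮e n → PMF (Vec 𝒳 n))
    (Wn : Vec 𝒳 n × Vec 𝒮 n → PMF (Vec 𝒴 n))
    (Wc : 𝒳 × 𝒮 → PMF 𝒴)
    (hq : ∀ (a : Vec 𝒜 n) (se : Vec 𝒮e n) (s : Vec 𝒮 n),
      (qn a) (se, s) = ∏ i : Fin n, (qs (a i)) (se i, s i))
    (hW : ∀ (x : Vec 𝒳 n) (s : Vec 𝒮 n) (y : Vec 𝒴 n),
      (Wn (x, s)) y = ∏ i : Fin n, (Wc (x i, s i)) (y i)) :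
    (n : ℝ)⁻¹ *
        (mutInfo ((convJoint PAU qn PX Wn).map fun t => ((t.1, t.2.1), t.2.2.2.2.2)) -
          condMutInfo ((convJoint PAU qn PX Wn).map fun t => (t.2.1, t.2.2.1, t.1))) ≤
      (n : ℝ)⁻¹ * ∑ i : Fin n,
        (mutInfo ((convJoint PAU qn PX Wn).map fun t =>
            ((Ustar i t, t.1 i), t.2.2.2.2.2 i)) -
          condMutInfo ((convJoint PAU qn PX Wn).map fun t =>
            (t.2.2.1 i, Ustar i t, t.1 i))) ∧
    (n : ℝ)⁻¹ *
        (mutInfo ((convJoint PAU qn PX Wn).map fun t => ((t.1, t.2.1), t.2.2.2.2.2)) -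
          condMutInfo ((convJoint PAU qn PX Wn).map fun t => (t.2.1, t.2.2.1, t.1))) ≤
      mutInfo ((uniformFin n hn).bind fun i => (convJoint PAU qn PX Wn).map fun t =>
          (((Ustar i t, i), t.1 i), t.2.2.2.2.2 i)) -
        condMutInfo ((uniformFin n hn).bind fun i => (convJoint PAU qn PX Wn).map fun t =>
          ((Ustar i t, i), t.2.2.1 i, t.1 i)) := by
  have hg1 := goal1 PAU qn PX Wn qs hq
  have hnn : (0 : ℝ) ≤ (n : ℝ)⁻¹ := by positivity
  have h2 := mul_le_mul_of_nonneg_left hg1 hnn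
  refine ⟨h2, ?_⟩
  have hJ := mixJ_eq PAU qn PX Wn qs hq hn
  have hC := mixC_eq PAU qn PX Wn qs hq hn
  have hqy : 0 ≤ mutInfo ((uniformFin n hn).bind fun j =>
      (convJoint PAU qn PX Wn).map fun t => ((j : Fin n), t.2.2.2.2.2 j)) :=
    mutInfo_nonneg _
  have hsplit : (n : ℝ)⁻¹ * ∑ i : Fin n,
      (mutInfo ((convJoint PAU qn PX Wn).map fun t => ((Ustar i t, t.1 i), t.2.2.2.2.2 i)) -
        condMutInfo ((convJoint PAU qn PX Wn).map fun t => (t.2.2.1 i, Ustar i t, t.1 i))) =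
      (n : ℝ)⁻¹ * (∑ i : Fin n,
        mutInfo ((convJoint PAU qn PX Wn).map fun t => ((Ustar i t, t.1 i), t.2.2.2.2.2 i))) -
      (n : ℝ)⁻¹ * (∑ i : Fin n,
        condMutInfo ((convJoint PAU qn PX Wn).map fun t => (t.2.2.1 i, Ustar i t, t.1 i))) := by
    rw [Finset.sum_sub_distrib, mul_sub]
  linarith


end ISAC
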